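/- Let λ₁,…,λ_m be real numbers with H_j > 0 for all 1 ≤ j ≤ k. Then for all 0 ≤ i < j ≤ k: (H_i/H_j)^{1/(j-i)} ≥ 1/H_1. -/

import Mathlib

open Finset

/-- The `k`-th elementary symmetric polynomial of `λ₁,…,λ_m`. -/
noncomputable def esymm (m k : ℕ) (lam : Fin m → ℝ) : ℝ :=
  ∑ s ∈ (Finset.univ : Finset (Fin m)).powersetCard k, ∏ i ∈ s, lam i

/-- The `k`-th elementary symmetric polynomial of the `m−1` variables with `λ_l` omitted. -/
noncomputable def esymmOmit (m k : ℕ) (lam : Fin m → ℝ) (l : Fin m) : ℝ :=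
  ∑ s ∈ ((Finset.univ : Finset (Fin m)).erase l).powersetCard k, ∏ i ∈ s, lam i

/-- Normalized `k`-th elementary symmetric function `H_k = σ_k / C(m,k)`. -/
noncomputable def Hk (m k : ℕ) (lam : Fin m → ℝ) : ℝ := esymm m k lam / (m.choose k)

/-- Normalized `k`-th elementary symmetric function of the tuple with `λ_l` omitted. -/
noncomputable def HkOmit (m k : ℕ) (lam : Fin m → ℝ) (l : Fin m) : ℝ :=
  esymmOmit m k lam l / ((m - 1).choose k)

namespace NewtonAux6

open Polynomial

open Polynomial

/-- Normalized symmetric function of a multiset. -/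
noncomputable def nH (s : Multiset ℝ) (j : ℕ) : ℝ :=
  s.esymm j / ((Multiset.card s).choose j)

@[simp] lemma esymm_zero' (s : Multiset ℝ) : s.esymm 0 = 1 := by
  simp [Multiset.esymm, Multiset.powersetCard_zero_left]

lemma esymm_eq_zero (s : Multiset ℝ) {j : ℕ} (h : Multiset.card s < j) : s.esymm j = 0 := by
  simp [Multiset.esymm, Multiset.powersetCard_eq_empty _ h]

lemma esymm_cons (a : ℝ) (s : Multiset ℝ) (k : ℕ) :
    (a ::ₘ s).esymm (k + 1) = s.esymm (k + 1) + a * s.esymm k := by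
  simp only [Multiset.esymm, Multiset.powersetCard_cons, Multiset.map_add, Multiset.sum_add,
    Multiset.map_map, Function.comp]
  congr 1
  rw [← Multiset.sum_map_mul_left]
  congr 1
  exact Multiset.map_congr rfl (fun t _ => by simp)

lemma esymm_one' (s : Multiset ℝ) : s.esymm 1 = s.sum := by
  simp [Multiset.esymm, Multiset.powersetCard_one, Multiset.map_map, Function.comp]

lemma esymm_self (s : Multiset ℝ) : s.esymm (Multiset.card s) = s.prod := by
  induction s using Multiset.induction with
  | empty => simp
  | cons a s ih =>
      rw [Multiset.card_cons, esymm_cons, esymm_eq_zero s (by omega), ih]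
      simp

lemma cs (s : Multiset ℝ) : s.sum ^ 2 ≤ (Multiset.card s) * (s.map (fun x => x ^ 2)).sum := by
  induction s using Multiset.induction with
  | empty => simp
  | cons a s ih =>
      simp only [Multiset.sum_cons, Multiset.map_cons, Multiset.card_cons]
      have h1 : (s.map (fun x => 2 * a * x)).sum ≤ (s.map (fun x => a ^ 2 + x ^ 2)).sum :=
        Multiset.sum_map_le_sum_map _ _ (fun x _ => by nlinarith [sq_nonneg (a - x)])
      have h2 : (s.map (fun x => 2 * a * x)).sum = 2 * a * s.sum := by
        rw [show (fun x : ℝ => 2 * a * x) = (fun x : ℝ => 2 * a * id x) from rfl,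
          Multiset.sum_map_mul_left]
        simp
      have h3 : (s.map (fun x => a ^ 2 + x ^ 2)).sum
          = (Multiset.card s) * a ^ 2 + (s.map (fun x => x ^ 2)).sum := by
        rw [Multiset.sum_map_add]
        simp [Multiset.map_const', mul_comm]
      rw [h2, h3] at h1
      push_cast
      nlinarith [ih]

lemma sum_sq_identity (s : Multiset ℝ) :
    s.sum ^ 2 = (s.map (fun x => x ^ 2)).sum + 2 * s.esymm 2 := by
  induction s using Multiset.induction with
  | empty =>
      rw [esymm_eq_zero (0 : Multiset ℝ) (show Multiset.card (0 : Multiset ℝ) < 2 by simp)]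
      simp
  | cons a s ih =>
      rw [Multiset.sum_cons, Multiset.map_cons, Multiset.sum_cons,
        show (2 : ℕ) = 1 + 1 from rfl, esymm_cons, esymm_one']
      linear_combination ih

lemma two_choose_two (n : ℕ) : 2 * n.choose 2 = n * (n - 1) := by
  induction n with
  | zero => simp
  | succ n ih =>
      rw [Nat.choose_succ_succ, Nat.mul_add, ih, Nat.choose_one_right]
      cases n <;> simp <;> ring

lemma newton_one (u : Multiset ℝ) (hu : 2 ≤ Multiset.card u) :
    u.esymm 2 / ((Multiset.card u).choose 2) ≤ (u.esymm 1 / Multiset.card u) ^ 2 := by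
  set n := Multiset.card u with hn
  have hc2 : (0:ℝ) < (n.choose 2 : ℝ) := by exact_mod_cast Nat.choose_pos hu
  have hn0 : (0:ℝ) < (n : ℝ) := by exact_mod_cast Nat.lt_of_lt_of_le Nat.zero_lt_two hu
  have hid := sum_sq_identity u
  have hcs := cs u
  have h2c : (2 : ℝ) * (n.choose 2 : ℝ) = (n : ℝ) * ((n : ℝ) - 1) := by
    have := two_choose_two n
    have h1 : ((2 * n.choose 2 : ℕ) : ℝ) = ((n * (n - 1) : ℕ) : ℝ) := by rw [this]
    push_cast [Nat.cast_sub (show 1 ≤ n by omega)] at h1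
    linarith [h1]
  rw [esymm_one', div_pow, div_le_div_iff₀ hc2 (by positivity)]
  rw [← hn] at hcs
  nlinarith [mul_nonneg hn0.le (sub_nonneg.mpr hcs), hid, h2c]

lemma esymm_rev : ∀ (s : Multiset ℝ), (0:ℝ) ∉ s → ∀ j ≤ Multiset.card s,
    s.prod * (s.map Inv.inv).esymm j = s.esymm (Multiset.card s - j) := by
  intro s
  induction s using Multiset.induction with
  | empty =>
      intro _ j hj
      rw [Multiset.card_zero, Nat.le_zero] at hj
      subst hj; simp
  | cons a s ih =>
      intro h0 j hj
      have ha : a ≠ 0 := fun h => h0 (h ▸ Multiset.mem_cons_self a s)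
      have h0s : (0:ℝ) ∉ s := fun h => h0 (Multiset.mem_cons_of_mem h)
      have hP : s.prod ≠ 0 := Multiset.prod_ne_zero h0s
      match j with
      | 0 =>
          rw [Nat.sub_zero, esymm_self, esymm_zero', mul_one]
      | (j + 1) =>
          rw [Multiset.card_cons] at hj
          rw [Multiset.map_cons, esymm_cons, Multiset.prod_cons]
          by_cases hcase : j + 1 ≤ Multiset.card s
          · have e1 := ih h0s (j + 1) hcase
            have e2 := ih h0s j (by omega)
            have hsub : Multiset.card (a ::ₘ s) - (j + 1) = (Multiset.card s - (j + 1)) + 1 := by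
              rw [Multiset.card_cons]; omega
            rw [hsub, esymm_cons]
            have hsub2 : Multiset.card s - (j + 1) + 1 = Multiset.card s - j := by omega
            have key : a * a⁻¹ = 1 := mul_inv_cancel₀ ha
            rw [hsub2]
            linear_combination a * e1 + (a * a⁻¹) * e2 + s.esymm (Multiset.card s - j) * key
          · have hj' : j = Multiset.card s := by omega
            subst hj'
            have hx : (Multiset.map Inv.inv s).esymm (Multiset.card s) = s.prod⁻¹ := by
              rw [← Multiset.card_map Inv.inv s, esymm_self, Multiset.prod_map_inv']
            rw [esymm_eq_zero (s.map Inv.inv) (by simp), hx, Multiset.card_cons,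
              show Multiset.card s + 1 - (Multiset.card s + 1) = 0 from by omega, esymm_zero']
            field_simp
            simp

lemma exists_deriv (s : Multiset ℝ) (n : ℕ) (hn : Multiset.card s = n + 1) :
    ∃ t : Multiset ℝ, Multiset.card t = n ∧
      ∀ j ≤ n, ((n + 1 - j : ℕ) : ℝ) * s.esymm j = ((n : ℝ) + 1) * t.esymm j := by
  set p : Polynomial ℝ := (s.map fun a => X - C a).prod with hp
  have hmonic : p.Monic := monic_multiset_prod_of_monic _ _ (fun a _ => monic_X_sub_C a)
  have hdeg : p.natDegree = n + 1 := by
    rw [hp, natDegree_multiset_prod_X_sub_C_eq_card, hn]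
  have hroots : p.roots = s := roots_multiset_prod_X_sub_C s
  have hctop : (derivative p).coeff n = (n : ℝ) + 1 := by
    rw [coeff_derivative, show p.coeff (n + 1) = 1 from hdeg ▸ hmonic.coeff_natDegree]
    push_cast; ring
  have hdne : derivative p ≠ 0 := fun h => by
    rw [h, coeff_zero] at hctop
    have : (0:ℝ) < (n : ℝ) + 1 := by positivity
    linarith [hctop ▸ this]
  have hdeg2 : (derivative p).natDegree = n := by
    have h1 : (derivative p).natDegree ≤ n := by
      have := natDegree_derivative_le p; omega
    have h2 : n ≤ (derivative p).natDegree :=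
      le_natDegree_of_ne_zero (by rw [hctop]; positivity)
    omega
  have hlc : (derivative p).leadingCoeff = (n : ℝ) + 1 := by
    rw [leadingCoeff, hdeg2, hctop]
  have hcards : Multiset.card (derivative p).roots = n := by
    have hub : Multiset.card (derivative p).roots ≤ n := hdeg2 ▸ (derivative p).card_roots' 
    have hlb := p.card_roots_le_derivative
    rw [hroots, hn] at hlb
    omega
  have hsplits : Splits (derivative p) :=
    splits_iff_card_roots.2 (hcards.trans hdeg2.symm)
  refine ⟨(derivative p).roots, hcards, fun j hj => ?_⟩
  have h1 : (derivative p).coeff (n - j)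
      = (-1 : ℝ) ^ j * (((n : ℝ) + 1) * (derivative p).roots.esymm j) := by
    rw [coeff_eq_esymm_roots_of_splits hsplits (by omega : n - j ≤ (derivative p).natDegree),
      hlc, hdeg2, show n - (n - j) = j from by omega]
    ring
  have h2 : (derivative p).coeff (n - j)
      = (-1 : ℝ) ^ j * (((n + 1 - j : ℕ) : ℝ) * s.esymm j) := by
    rw [coeff_derivative, show n - j + 1 = n + 1 - j from by omega,
      Multiset.prod_X_sub_C_coeff s (show n + 1 - j ≤ Multiset.card s from by omega),
      hn, show n + 1 - (n + 1 - j) = j from by omega]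
    have : ((n - j : ℕ) : ℝ) + 1 = ((n + 1 - j : ℕ) : ℝ) := by
      push_cast [Nat.cast_sub (by omega : j ≤ n), Nat.cast_sub (by omega : j ≤ n + 1)]
      ring
    rw [← this]; ring
  exact mul_left_cancel₀ (pow_ne_zero j (by norm_num : (-1:ℝ) ≠ 0)) (h2.symm.trans h1)

lemma choose_aux (n j : ℕ) (h : j ≤ n) :
    (n + 1) * n.choose j = (n + 1 - j) * ((n + 1).choose j) := by
  calc (n + 1) * n.choose j = (n + 1).choose (j + 1) * (j + 1) := by
        simpa using Nat.add_one_mul_choose_eq n j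
    _ = (n + 1).choose j * ((n + 1) - j) := Nat.choose_succ_right_eq (n + 1) j
    _ = (n + 1 - j) * ((n + 1).choose j) := Nat.mul_comm _ _

lemma newton_top (s : Multiset ℝ) (k : ℕ) (hcard : Multiset.card s = k + 2) :
    nH s k * nH s (k + 2) ≤ nH s (k + 1) ^ 2 := by
  by_cases hz : (0:ℝ) ∈ s
  · have : nH s (k + 2) = 0 := by
      rw [nH, ← hcard, esymm_self, Multiset.prod_eq_zero hz, zero_div]
    rw [this, mul_zero]
    positivity
  · set u := s.map Inv.inv with hu
    have hcu : Multiset.card u = k + 2 := by rw [hu, Multiset.card_map, hcard]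
    have hP : s.prod ≠ 0 := Multiset.prod_ne_zero hz
    have e0 : s.esymm (k + 2) = s.prod := by rw [← hcard, esymm_self]
    have e1 : s.prod * u.esymm 1 = s.esymm (k + 1) := by
      have := esymm_rev s hz 1 (by omega)
      rwa [hcard, show k + 2 - 1 = k + 1 from rfl] at this
    have e2 : s.prod * u.esymm 2 = s.esymm k := by
      have := esymm_rev s hz 2 (by omega)
      rwa [hcard, show k + 2 - 2 = k from rfl] at this
    have key := newton_one u (by omega)
    rw [hcu] at key
    have hsymm : (k + 2).choose k = (k + 2).choose 2 := by
      have := Nat.choose_symm (show 2 ≤ k + 2 by omega)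
      simpa using this
    push_cast at key
    have h2' := mul_le_mul_of_nonneg_left key (sq_nonneg s.prod)
    rw [nH, nH, nH, hcard, e0, ← e1, ← e2, hsymm, Nat.choose_self,
      show (k + 2).choose (k + 1) = k + 2 from Nat.choose_succ_self_right (k + 1)]
    push_cast
    calc s.prod * u.esymm 2 / ((k + 2).choose 2 : ℝ) * (s.prod / 1)
        = s.prod ^ 2 * (u.esymm 2 / ((k + 2).choose 2 : ℝ)) := by ring
      _ ≤ s.prod ^ 2 * ((u.esymm 1 / ((k:ℝ) + 2)) ^ 2) := h2'
      _ = (s.prod * u.esymm 1 / ((k:ℝ) + 2)) ^ 2 := by ring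

lemma newton_all : ∀ (n : ℕ) (s : Multiset ℝ) (k : ℕ), Multiset.card s = n → k + 2 ≤ n →
    nH s k * nH s (k + 2) ≤ nH s (k + 1) ^ 2 := by
  intro n
  induction n with
  | zero => intro s k _ hk; omega
  | succ n ih =>
      intro s k hcard hk
      by_cases htop : k + 2 = n + 1
      · exact newton_top s k (by omega)
      · have hk' : k + 2 ≤ n := by omega
        obtain ⟨t, ht, hd⟩ := exists_deriv s n hcard
        have heq : ∀ j ≤ n, nH s j = nH t j := by
          intro j hj
          have hdj := hd j hj
          have hcc : ((n : ℝ) + 1) * (n.choose j : ℝ)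
              = ((n + 1 - j : ℕ) : ℝ) * (((n + 1).choose j : ℕ) : ℝ) := by
            exact_mod_cast congrArg (fun x : ℕ => (x : ℝ)) (choose_aux n j hj)
          have c1 : (0:ℝ) < ((n + 1).choose j : ℝ) := by
            exact_mod_cast Nat.choose_pos (by omega : j ≤ n + 1)
          have c2 : (0:ℝ) < (n.choose j : ℝ) := by
            exact_mod_cast Nat.choose_pos hj
          rw [nH, nH, hcard, ht, div_eq_div_iff (by positivity) (by positivity)]
          apply mul_left_cancel₀ (show ((n:ℝ) + 1) ≠ 0 by positivity)
          linear_combination ((((n+1).choose j : ℕ) : ℝ)) * hdj + s.esymm j * hcc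
        rw [heq k (by omega), heq (k + 1) (by omega), heq (k + 2) (by omega)]
        exact ih t k ht hk'

end NewtonAux6

/-- (H_i/H_j)^{1/(j-i)} ≥ 1/H_1. -/
theorem ratio_rpow_ge (m k : ℕ) (lam : Fin m → ℝ)
    (hpos : ∀ j, 1 ≤ j → j ≤ k → 0 < Hk m j lam)
    (i j : ℕ) (hij : i < j) (hjk : j ≤ k) :
    1 / Hk m 1 lam ≤ (Hk m i lam / Hk m j lam) ^ ((1 : ℝ) / ((j : ℝ) - (i : ℝ))) := by
  have key : ∀ t : ℕ, Hk m t lam = NewtonAux6.nH (Multiset.map lam Finset.univ.val) t := by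
    intro t
    have he : esymm m t lam = (Multiset.map lam Finset.univ.val).esymm t :=
      (Finset.esymm_map_val lam Finset.univ t).symm
    rw [Hk, NewtonAux6.nH, he]
    congr 2
    simp
  have hcard : Multiset.card (Multiset.map lam Finset.univ.val) = m := by simp
  have H0 : Hk m 0 lam = 1 := by
    simp [Hk, esymm, Finset.powersetCard_zero]
  have hm : k ≤ m := by
    by_contra hmk
    have h1 := hpos (m + 1) (by omega) (by omega)
    have h2 : Hk m (m + 1) lam = 0 := by
      rw [Hk, Nat.choose_eq_zero_of_lt (by omega)]
      simp
    rw [h2] at h1; exact lt_irrefl 0 h1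
  have hpos' : ∀ t, t ≤ k → 0 < Hk m t lam := by
    intro t ht
    rcases Nat.eq_zero_or_pos t with h | h
    · rw [h, H0]; norm_num
    · exact hpos t h ht
  have newtonH : ∀ t, t + 2 ≤ m →
      Hk m t lam * Hk m (t + 2) lam ≤ Hk m (t + 1) lam ^ 2 := by
    intro t ht
    rw [key t, key (t + 1), key (t + 2)]
    exact NewtonAux6.newton_all m _ t hcard ht
  have claim : ∀ u, u + 1 ≤ k → Hk m (u + 1) lam ≤ Hk m 1 lam * Hk m u lam := by
    intro u
    induction u with
    | zero => intro _; rw [H0, mul_one]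
    | succ u ih =>
        intro h
        have hN := newtonH u (by omega)
        have ihu := ih (by omega)
        have p0 := hpos' u (by omega)
        have p1 := hpos' (u + 1) (by omega)
        have p2 := hpos' (u + 2) (by omega)
        have pH1 := hpos' 1 (by omega)
        nlinarith [mul_le_mul_of_nonneg_right ihu p1.le]
  have chain : ∀ d i', i' + d ≤ k → Hk m (i' + d) lam ≤ Hk m 1 lam ^ d * Hk m i' lam := by
    intro d
    induction d with
    | zero => intro i' _; simp
    | succ d ih =>
        intro i' h
        have h1 : Hk m (i' + d + 1) lam ≤ Hk m 1 lam * Hk m (i' + d) lam :=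
          claim (i' + d) (by omega)
        have h2 := ih i' (by omega)
        have pH1 := hpos' 1 (by omega)
        calc Hk m (i' + (d + 1)) lam = Hk m (i' + d + 1) lam := by ring_nf
          _ ≤ Hk m 1 lam * Hk m (i' + d) lam := h1
          _ ≤ Hk m 1 lam * (Hk m 1 lam ^ d * Hk m i' lam) :=
              mul_le_mul_of_nonneg_left h2 pH1.le
          _ = Hk m 1 lam ^ (d + 1) * Hk m i' lam := by ring
  -- final computation
  set d : ℕ := j - i with hd
  have hdj : i + d = j := by omega
  have hle : Hk m j lam ≤ Hk m 1 lam ^ d * Hk m i lam := by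
    rw [← hdj]; exact chain d i (by omega)
  have pj := hpos' j (by omega)
  have pi' := hpos' i (by omega)
  have pH1 := hpos' 1 (by omega)
  have hr : (1 / Hk m 1 lam) ^ d ≤ Hk m i lam / Hk m j lam := by
    rw [div_pow, one_pow, div_le_div_iff₀ (by positivity) pj]
    rw [one_mul, mul_comm]
    exact hle
  have hcast : (j : ℝ) - (i : ℝ) = (d : ℝ) := by
    rw [hd]; push_cast [Nat.cast_sub hij.le]; ring
  have hd0 : (0:ℝ) < (d : ℝ) := by
    have : 1 ≤ d := by omega
    exact_mod_cast Nat.lt_of_lt_of_le Nat.zero_lt_one this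
  rw [hcast]
  have step1 : ((1 / Hk m 1 lam) ^ d : ℝ) ^ ((1:ℝ) / (d : ℝ))
      ≤ (Hk m i lam / Hk m j lam) ^ ((1:ℝ) / (d : ℝ)) :=
    Real.rpow_le_rpow (by positivity) hr (by positivity)
  calc 1 / Hk m 1 lam
      = ((1 / Hk m 1 lam) ^ d : ℝ) ^ ((1:ℝ) / (d : ℝ)) := by
        rw [← Real.rpow_natCast (1 / Hk m 1 lam) d, ← Real.rpow_mul (by positivity),
          mul_one_div_cancel hd0.ne', Real.rpow_one]
    _ ≤ (Hk m i lam / Hk m j lam) ^ ((1:ℝ) / (d : ℝ)) := step1
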